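/- arXiv:2002.11478 — 4 statements merged into one kernel-verified Lean document; each statement's English description precedes it below -/
import Mathlib

section
/- Let B be a bialgebra over a commutative ring k and let R be a universal R-matrix on B, i.e. an invertible element of the algebra B⊗B satisfying quasi-cocommutativity τ(Δ(b)) = R·Δ(b)·R⁻¹ for all b ∈ B and the hexagon relations (Δ⊗id)(R) = R₁₃·R₂₃ and (id⊗Δ)(R) = R₁₃·R₁₂. Then R satisfies the quantum Yang–Baxter equation R₁₂·R₁₃·R₂₃ = R₂₃·R₁₃·R₁₂ in B⊗B⊗B. -/
/-!
STATEMENT 0: If `R` is a universal R-matrix on a bialgebra `B` over a commutative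
ring `k` (an invertible element of `B ⊗ B` satisfying quasi-cocommutativity and the
two hexagon relations), then `R` satisfies the quantum Yang–Baxter equation
`R₁₂ · R₁₃ · R₂₃ = R₂₃ · R₁₃ · R₁₂` in `B ⊗ B ⊗ B`.
-/

open TensorProduct

noncomputable section

namespace Stmt

variable (R : Type*) [CommRing R] (B : Type*) [Ring B] [Bialgebra R B]

/-- Comultiplication as an algebra homomorphism. -/
def Δ : B →ₐ[R] B ⊗[R] B := Bialgebra.comulAlgHom R B

/-- Flip of the two tensor factors of `B ⊗ B`. -/
def τ : B ⊗[R] B ≃ₐ[R] B ⊗[R] B := Algebra.TensorProduct.comm R B B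

/-- Leg embedding `x ↦ x₁₂` of `B ⊗ B` into `B ⊗ B ⊗ B`. -/
def ι₁₂ : B ⊗[R] B →ₐ[R] B ⊗[R] (B ⊗[R] B) :=
  Algebra.TensorProduct.map (AlgHom.id R B) Algebra.TensorProduct.includeLeft

/-- Leg embedding `x ↦ x₁₃` of `B ⊗ B` into `B ⊗ B ⊗ B`. -/
def ι₁₃ : B ⊗[R] B →ₐ[R] B ⊗[R] (B ⊗[R] B) :=
  Algebra.TensorProduct.map (AlgHom.id R B) Algebra.TensorProduct.includeRight

/-- Leg embedding `x ↦ x₂₃` of `B ⊗ B` into `B ⊗ B ⊗ B`. -/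
def ι₂₃ : B ⊗[R] B →ₐ[R] B ⊗[R] (B ⊗[R] B) :=
  Algebra.TensorProduct.includeRight

/-- `Δ ⊗ id : B ⊗ B → B ⊗ B ⊗ B` (re-associated). -/
def Δ₁ : B ⊗[R] B →ₐ[R] B ⊗[R] (B ⊗[R] B) :=
  (Algebra.TensorProduct.assoc R R R B B B).toAlgHom.comp
    (Algebra.TensorProduct.map (Δ R B) (AlgHom.id R B))

/-- `id ⊗ Δ : B ⊗ B → B ⊗ B ⊗ B`. -/
def Δ₂ : B ⊗[R] B →ₐ[R] B ⊗[R] (B ⊗[R] B) :=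
  Algebra.TensorProduct.map (AlgHom.id R B) (Δ R B)

/-- Swap the first two legs of `B ⊗ (B ⊗ B)`. -/
def σ : B ⊗[R] (B ⊗[R] B) ≃ₐ[R] B ⊗[R] (B ⊗[R] B) :=
  ((Algebra.TensorProduct.assoc R R R B B B).symm.trans
    (Algebra.TensorProduct.congr (τ R B) AlgEquiv.refl)).trans
    (Algebra.TensorProduct.assoc R R R B B B)

lemma σ_assoc (y : B ⊗[R] B) (c : B) :
    σ R B ((Algebra.TensorProduct.assoc R R R B B B) (y ⊗ₜ c)) =
      (Algebra.TensorProduct.assoc R R R B B B) (τ R B y ⊗ₜ c) := by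
  simp [σ]

lemma ι₁₂_eq (x : B ⊗[R] B) :
    ι₁₂ R B x = (Algebra.TensorProduct.assoc R R R B B B) (x ⊗ₜ 1) := by
  induction x with
  | zero => simp
  | tmul a b => simp [ι₁₂]
  | add x y hx hy => rw [map_add, hx, hy, ← map_add, ← TensorProduct.add_tmul]

lemma σ_ι₁₃ (x : B ⊗[R] B) : σ R B (ι₁₃ R B x) = ι₂₃ R B x := by
  induction x with
  | zero => simp
  | tmul a b => simp [σ, ι₁₃, ι₂₃, τ]
  | add x y hx hy => rw [map_add, map_add, hx, hy, map_add]

lemma σ_ι₂₃ (x : B ⊗[R] B) : σ R B (ι₂₃ R B x) = ι₁₃ R B x := by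
  induction x with
  | zero => simp
  | tmul a b => simp [σ, ι₁₃, ι₂₃, τ]
  | add x y hx hy => rw [map_add, map_add, hx, hy, map_add]

lemma Δ₁_tmul (b c : B) :
    Δ₁ R B (b ⊗ₜ c) = (Algebra.TensorProduct.assoc R R R B B B) (Δ R B b ⊗ₜ c) := by
  simp [Δ₁]

/-- **The quantum Yang–Baxter equation.**  A universal R-matrix `Rm` on a bialgebra `B`
(invertible, quasi-cocommutative and satisfying the two hexagon relations) satisfies
`R₁₂ · R₁₃ · R₂₃ = R₂₃ · R₁₃ · R₁₂` in `B ⊗ B ⊗ B`. -/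
theorem quantum_yang_baxter
    (Rm Rm' : B ⊗[R] B)
    (hinv : Rm * Rm' = 1) (hinv' : Rm' * Rm = 1)
    (hqc : ∀ b : B, τ R B (Δ R B b) = Rm * Δ R B b * Rm')
    (hhex₁ : Δ₁ R B Rm = ι₁₃ R B Rm * ι₂₃ R B Rm)
    (hhex₂ : Δ₂ R B Rm = ι₁₃ R B Rm * ι₁₂ R B Rm) :
    ι₁₂ R B Rm * ι₁₃ R B Rm * ι₂₃ R B Rm = ι₂₃ R B Rm * ι₁₃ R B Rm * ι₁₂ R B Rm := by
  have hRm : ∀ b : B, Rm * Δ R B b = τ R B (Δ R B b) * Rm := by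
    intro b
    rw [hqc b, mul_assoc, mul_assoc, hinv', mul_one]
  have key : ∀ x : B ⊗[R] B,
      ι₁₂ R B Rm * Δ₁ R B x = σ R B (Δ₁ R B x) * ι₁₂ R B Rm := by
    intro x
    induction x with
    | zero => simp
    | tmul b c =>
        rw [Δ₁_tmul, σ_assoc, ι₁₂_eq, ← map_mul, ← map_mul,
          Algebra.TensorProduct.tmul_mul_tmul, Algebra.TensorProduct.tmul_mul_tmul,
          one_mul, mul_one, hRm]
    | add x y hx hy =>
        simp only [map_add, mul_add, add_mul, hx, hy]
  calc ι₁₂ R B Rm * ι₁₃ R B Rm * ι₂₃ R B Rm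
      = ι₁₂ R B Rm * Δ₁ R B Rm := by rw [hhex₁, mul_assoc]
    _ = σ R B (Δ₁ R B Rm) * ι₁₂ R B Rm := key Rm
    _ = ι₂₃ R B Rm * ι₁₃ R B Rm * ι₁₂ R B Rm := by
        rw [hhex₁, map_mul, σ_ι₁₃, σ_ι₂₃]

end Stmt
end
end

section
/- Let (B, Δ, ε) be a bialgebra over a commutative ring k, let F be a Drinfel'd twist on B, and let R be a universal R-matrix on B. Then R_F := F₂₁·R·F⁻¹ is an invertible element of B⊗B and is a universal R-matrix on the twisted bialgebra (B, Δ_F, ε): τ(Δ_F(b)) = R_F·Δ_F(b)·R_F⁻¹ for all b ∈ B, and (Δ_F⊗id)(R_F) = (R_F)₁₃·(R_F)₂₃ and (id⊗Δ_F)(R_F) = (R_F)₁₃·(R_F)₁₂ in B⊗B⊗B. Moreover, if R is triangular, i.e. R₂₁ = R⁻¹, then R_F is triangular: (R_F)₂₁ = R_F⁻¹. -/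
/-!
STATEMENT 2: If `F` is a Drinfel'd twist and `R` a universal R-matrix on a bialgebra
`(B, Δ, ε)`, then `R_F := F₂₁ · R · F⁻¹` is invertible and is a universal R-matrix for
the twisted bialgebra `(B, Δ_F, ε)` (quasi-cocommutativity and both hexagon relations
with respect to `Δ_F`); moreover if `R` is triangular then so is `R_F`.
-/

open TensorProduct

noncomputable section

namespace Stmt

variable (R : Type*) [CommRing R] (B : Type*) [Ring B] [Bialgebra R B]

/-- Counit as an algebra homomorphism. -/
def ε : B →ₐ[R] R := Bialgebra.counitAlgHom R B

/-- `ε ⊗ id : B ⊗ B → B`. -/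
def ε₁ : B ⊗[R] B →ₐ[R] B :=
  (Algebra.TensorProduct.lid R B).toAlgHom.comp
    (Algebra.TensorProduct.map (ε R B) (AlgHom.id R B))

/-- `id ⊗ ε : B ⊗ B → B`. -/
def ε₂ : B ⊗[R] B →ₐ[R] B :=
  (Algebra.TensorProduct.rid R R B).toAlgHom.comp
    (Algebra.TensorProduct.map (AlgHom.id R B) (ε R B))

/-- The twisted coproduct `Δ_F(b) = F · Δ(b) · F⁻¹` as a `k`-linear map. -/
def DeltaF (F Finv : B ⊗[R] B) : B →ₗ[R] B ⊗[R] B :=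
  (LinearMap.mulRight R Finv) ∘ₗ (LinearMap.mulLeft R F) ∘ₗ
    (Coalgebra.comul (R := R) (A := B))

/-- The twisted R-matrix `R_F := F₂₁ · R · F⁻¹`. -/
def RF (F Finv Rm : B ⊗[R] B) : B ⊗[R] B := τ R B F * Rm * Finv

open Algebra.TensorProduct in
/-- cyclic permutation `a⊗b⊗c ↦ b⊗c⊗a`. -/
def P : B ⊗[R] (B ⊗[R] B) →ₐ[R] B ⊗[R] (B ⊗[R] B) :=
  (Algebra.TensorProduct.assoc R R R B B B).toAlgHom.comp
    (Algebra.TensorProduct.comm R B (B ⊗[R] B)).toAlgHom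

/-- cyclic permutation `a⊗b⊗c ↦ c⊗a⊗b`. -/
def Q : B ⊗[R] (B ⊗[R] B) →ₐ[R] B ⊗[R] (B ⊗[R] B) :=
  (Algebra.TensorProduct.comm R (B ⊗[R] B) B).toAlgHom.comp
    (Algebra.TensorProduct.assoc R R R B B B).symm.toAlgHom

/-- swap of legs 2,3. -/
def s₂₃ : B ⊗[R] (B ⊗[R] B) →ₐ[R] B ⊗[R] (B ⊗[R] B) :=
  Algebra.TensorProduct.map (AlgHom.id R B) (τ R B).toAlgHom

/-- swap of legs 1,2. -/
def s₁₂ : B ⊗[R] (B ⊗[R] B) →ₐ[R] B ⊗[R] (B ⊗[R] B) :=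
  (Algebra.TensorProduct.assoc R R R B B B).toAlgHom.comp
    ((Algebra.TensorProduct.map (τ R B).toAlgHom (AlgHom.id R B)).comp
      (Algebra.TensorProduct.assoc R R R B B B).symm.toAlgHom)

example (a b c : B) : P R B (a ⊗ₜ (b ⊗ₜ c)) = b ⊗ₜ (c ⊗ₜ a) := by
  simp [P, τ]

example (a b c : B) : Q R B (a ⊗ₜ (b ⊗ₜ c)) = c ⊗ₜ (a ⊗ₜ b) := by
  simp [Q, τ]

example (a b c : B) : s₂₃ R B (a ⊗ₜ (b ⊗ₜ c)) = a ⊗ₜ (c ⊗ₜ b) := by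
  simp [s₂₃, τ]

example (a b c : B) : s₁₂ R B (a ⊗ₜ (b ⊗ₜ c)) = b ⊗ₜ (a ⊗ₜ c) := by
  simp [s₁₂, τ]

example : (P R B).comp (ι₁₂ R B) = (ι₁₃ R B).comp (τ R B).toAlgHom := by
  ext b <;> simp [P, τ, ι₁₂, ι₁₃]
/-- Conjugation by an invertible element, as an algebra homomorphism. -/
def conj {A : Type*} [Ring A] [Algebra R A] (u v : A) (huv : u * v = 1)
    (hvu : v * u = 1) : A →ₐ[R] A where
  toFun x := u * x * v
  map_one' := by simpa using huv
  map_mul' x y := by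
    calc u * (x * y) * v = (u * x) * (v * u) * (y * v) := by rw [hvu]; noncomm_ring
      _ = (u * x * v) * (u * y * v) := by noncomm_ring
  map_zero' := by simp
  map_add' x y := by noncomm_ring
  commutes' r := by
    simp only [Algebra.algebraMap_eq_smul_one, mul_smul_comm, smul_mul_assoc, mul_one, huv]

variable {R B}

lemma tau_tau (x : B ⊗[R] B) : τ R B (τ R B x) = x := by
  induction x using TensorProduct.induction_on with
  | zero => simp
  | tmul a b => simp [τ]
  | add x y hx hy => simp [map_add, hx, hy]

section comps
variable (x : B ⊗[R] B)

lemma P_ι₁₂ : P R B (ι₁₂ R B x) = ι₁₃ R B (τ R B x) := by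
  have : (P R B).comp (ι₁₂ R B) = (ι₁₃ R B).comp (τ R B).toAlgHom := by
    ext b <;> simp [P, τ, ι₁₂, ι₁₃, Algebra.TensorProduct.one_def]
  exact DFunLike.congr_fun this x

lemma P_ι₂₃ : P R B (ι₂₃ R B x) = ι₁₂ R B x := by
  have : (P R B).comp (ι₂₃ R B) = ι₁₂ R B := by
    ext b <;> simp [P, τ, ι₁₂, ι₂₃, Algebra.TensorProduct.one_def]
  exact DFunLike.congr_fun this x

lemma P_ι₁₃ : P R B (ι₁₃ R B x) = ι₂₃ R B (τ R B x) := by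
  have : (P R B).comp (ι₁₃ R B) = (ι₂₃ R B).comp (τ R B).toAlgHom := by
    ext b <;> simp [P, τ, ι₁₃, ι₂₃, Algebra.TensorProduct.one_def]
  exact DFunLike.congr_fun this x

lemma Q_ι₁₂ : Q R B (ι₁₂ R B x) = ι₂₃ R B x := by
  have : (Q R B).comp (ι₁₂ R B) = ι₂₃ R B := by
    ext b <;> simp [Q, τ, ι₁₂, ι₂₃, Algebra.TensorProduct.one_def]
  exact DFunLike.congr_fun this x

lemma Q_ι₂₃ : Q R B (ι₂₃ R B x) = ι₁₃ R B (τ R B x) := by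
  have : (Q R B).comp (ι₂₃ R B) = (ι₁₃ R B).comp (τ R B).toAlgHom := by
    ext b <;> simp [Q, τ, ι₁₃, ι₂₃, Algebra.TensorProduct.one_def]
  exact DFunLike.congr_fun this x

lemma s₂₃_ι₁₂ : s₂₃ R B (ι₁₂ R B x) = ι₁₃ R B x := by
  have : (s₂₃ R B).comp (ι₁₂ R B) = ι₁₃ R B := by
    ext b <;> simp [s₂₃, τ, ι₁₂, ι₁₃, Algebra.TensorProduct.one_def]
  exact DFunLike.congr_fun this x

lemma s₂₃_ι₂₃ : s₂₃ R B (ι₂₃ R B x) = ι₂₃ R B (τ R B x) := by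
  have : (s₂₃ R B).comp (ι₂₃ R B) = (ι₂₃ R B).comp (τ R B).toAlgHom := by
    ext b <;> simp [s₂₃, τ, ι₂₃, Algebra.TensorProduct.one_def]
  exact DFunLike.congr_fun this x

lemma s₂₃_ι₁₃ : s₂₃ R B (ι₁₃ R B x) = ι₁₂ R B x := by
  have : (s₂₃ R B).comp (ι₁₃ R B) = ι₁₂ R B := by
    ext b <;> simp [s₂₃, τ, ι₁₂, ι₁₃, Algebra.TensorProduct.one_def]
  exact DFunLike.congr_fun this x

lemma s₁₂_ι₁₂ : s₁₂ R B (ι₁₂ R B x) = ι₁₂ R B (τ R B x) := by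
  have : (s₁₂ R B).comp (ι₁₂ R B) = (ι₁₂ R B).comp (τ R B).toAlgHom := by
    ext b <;> simp [s₁₂, τ, ι₁₂, Algebra.TensorProduct.one_def]
  exact DFunLike.congr_fun this x

lemma s₁₂_ι₂₃ : s₁₂ R B (ι₂₃ R B x) = ι₁₃ R B x := by
  have : (s₁₂ R B).comp (ι₂₃ R B) = ι₁₃ R B := by
    ext b <;> simp [s₁₂, τ, ι₁₃, ι₂₃, Algebra.TensorProduct.one_def]
  exact DFunLike.congr_fun this x

end comps
@[simp] lemma conj_apply {A : Type*} [Ring A] [Algebra R A] (u v : A) (huv : u * v = 1)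
    (hvu : v * u = 1) (x : A) : conj R u v huv hvu x = u * x * v := rfl


lemma assoc_tmul_one (y : B ⊗[R] B) :
    (Algebra.TensorProduct.assoc R R R B B B) (y ⊗ₜ (1 : B)) = ι₁₂ R B y := by
  induction y using TensorProduct.induction_on with
  | zero => simp
  | tmul a b => simp [ι₁₂]
  | add x y hx hy => simp [add_tmul, hx, hy]

lemma Δ₁_left (b : B) : Δ₁ R B (b ⊗ₜ (1 : B)) = ι₁₂ R B (Δ R B b) := by
  simp [Δ₁]
  exact assoc_tmul_one _

lemma Δ₁_right (b : B) : Δ₁ R B ((1 : B) ⊗ₜ b) = (1 : B) ⊗ₜ ((1 : B) ⊗ₜ b) := by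
  simp [Δ₁, Algebra.TensorProduct.one_def]

lemma Δ₂_left (b : B) : Δ₂ R B (b ⊗ₜ (1 : B)) = b ⊗ₜ (1 : B ⊗[R] B) := by
  simp [Δ₂]

lemma Δ₂_right (b : B) : Δ₂ R B ((1 : B) ⊗ₜ b) = ι₂₃ R B (Δ R B b) := by
  simp [Δ₂, ι₂₃]

-- commutation of disjoint legs
lemma comm13 (y : B ⊗[R] B) (b : B) :
    ι₁₃ R B y * ((1 : B) ⊗ₜ (b ⊗ₜ (1 : B))) = ((1 : B) ⊗ₜ (b ⊗ₜ (1 : B))) * ι₁₃ R B y := by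
  induction y using TensorProduct.induction_on with
  | zero => simp
  | tmul c d => simp [ι₁₃, Algebra.TensorProduct.tmul_mul_tmul]
  | add x y hx hy => simp [map_add, add_mul, mul_add, hx, hy]

lemma comm23 (y : B ⊗[R] B) (b : B) :
    ι₂₃ R B y * (b ⊗ₜ (1 : B ⊗[R] B)) = (b ⊗ₜ (1 : B ⊗[R] B)) * ι₂₃ R B y := by
  induction y using TensorProduct.induction_on with
  | zero => simp
  | tmul c d => simp [ι₂₃, Algebra.TensorProduct.tmul_mul_tmul, Algebra.TensorProduct.one_def]
  | add x y hx hy => simp [map_add, add_mul, mul_add, hx, hy]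

lemma comm12 (y : B ⊗[R] B) (b : B) :
    ι₁₂ R B y * ((1 : B) ⊗ₜ ((1 : B) ⊗ₜ b)) = ((1 : B) ⊗ₜ ((1 : B) ⊗ₜ b)) * ι₁₂ R B y := by
  induction y using TensorProduct.induction_on with
  | zero => simp
  | tmul c d => simp [ι₁₂, Algebra.TensorProduct.tmul_mul_tmul]
  | add x y hx hy => simp [map_add, add_mul, mul_add, hx, hy]

section inter
variable (Rm Rm' : B ⊗[R] B) (hR : Rm * Rm' = 1) (hR' : Rm' * Rm = 1)
  (hqc : ∀ b : B, τ R B (Δ R B b) = Rm * Δ R B b * Rm')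
include hR hR' hqc


-- T2
lemma inter23 (x : B ⊗[R] B) :
    ι₂₃ R B Rm * Δ₂ R B x * ι₂₃ R B Rm' = s₂₃ R B (Δ₂ R B x) := by
  have h1 : ι₂₃ R B Rm * ι₂₃ R B Rm' = 1 := by rw [← map_mul, hR, map_one]
  have h2 : ι₂₃ R B Rm' * ι₂₃ R B Rm = 1 := by rw [← map_mul, hR', map_one]
  have key : (conj R (ι₂₃ R B Rm) (ι₂₃ R B Rm') h1 h2).comp (Δ₂ R B) =
      (s₂₃ R B).comp (Δ₂ R B) := by
    ext b
    · simp only [AlgHom.comp_apply, Algebra.TensorProduct.includeLeft_apply, conj_apply,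
        Δ₂_left, comm23, mul_assoc, h1]
      simp [s₂₃, τ, Algebra.TensorProduct.one_def]
    · simp only [AlgHom.restrictScalars_apply, AlgHom.comp_apply, Algebra.TensorProduct.includeRight_apply, conj_apply,
        Δ₂_right, ← map_mul, ← hqc, s₂₃_ι₂₃]
  exact DFunLike.congr_fun key x

-- T4
lemma inter12 (x : B ⊗[R] B) :
    ι₁₂ R B Rm * Δ₁ R B x * ι₁₂ R B Rm' = s₁₂ R B (Δ₁ R B x) := by
  have h1 : ι₁₂ R B Rm * ι₁₂ R B Rm' = 1 := by rw [← map_mul, hR, map_one]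
  have h2 : ι₁₂ R B Rm' * ι₁₂ R B Rm = 1 := by rw [← map_mul, hR', map_one]
  have key : (conj R (ι₁₂ R B Rm) (ι₁₂ R B Rm') h1 h2).comp (Δ₁ R B) =
      (s₁₂ R B).comp (Δ₁ R B) := by
    ext b
    · simp only [AlgHom.comp_apply, Algebra.TensorProduct.includeLeft_apply, conj_apply,
        Δ₁_left, ← map_mul, ← hqc, s₁₂_ι₁₂]
    · simp only [AlgHom.restrictScalars_apply, AlgHom.comp_apply, Algebra.TensorProduct.includeRight_apply, conj_apply,
        Δ₁_right, comm12, mul_assoc, h1]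
      simp [s₁₂, τ, Algebra.TensorProduct.one_def]
  exact DFunLike.congr_fun key x

-- T1
lemma inter13P (x : B ⊗[R] B) :
    ι₁₃ R B Rm * s₂₃ R B (Δ₁ R B x) * ι₁₃ R B Rm' = P R B (Δ₁ R B x) := by
  have h1 : ι₁₃ R B Rm * ι₁₃ R B Rm' = 1 := by rw [← map_mul, hR, map_one]
  have h2 : ι₁₃ R B Rm' * ι₁₃ R B Rm = 1 := by rw [← map_mul, hR', map_one]
  have key : (conj R (ι₁₃ R B Rm) (ι₁₃ R B Rm') h1 h2).comp ((s₂₃ R B).comp (Δ₁ R B)) =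
      (P R B).comp (Δ₁ R B) := by
    ext b
    · simp only [AlgHom.comp_apply, Algebra.TensorProduct.includeLeft_apply, conj_apply,
        Δ₁_left, s₂₃_ι₁₂, ← map_mul, ← hqc, P_ι₁₂]
    · simp only [AlgHom.restrictScalars_apply, AlgHom.comp_apply, Algebra.TensorProduct.includeRight_apply, conj_apply,
        Δ₁_right]
      have e1 : s₂₃ R B ((1 : B) ⊗ₜ ((1 : B) ⊗ₜ b)) = (1 : B) ⊗ₜ (b ⊗ₜ (1 : B)) := by
        simp [s₂₃, τ]
      have e2 : P R B ((1 : B) ⊗ₜ ((1 : B) ⊗ₜ b)) = (1 : B) ⊗ₜ (b ⊗ₜ (1 : B)) := by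
        simp [P, τ]
      rw [e1, e2, comm13, mul_assoc, h1, mul_one]
  exact DFunLike.congr_fun key x

-- T3
lemma inter13Q (x : B ⊗[R] B) :
    ι₁₃ R B Rm * s₁₂ R B (Δ₂ R B x) * ι₁₃ R B Rm' = Q R B (Δ₂ R B x) := by
  have h1 : ι₁₃ R B Rm * ι₁₃ R B Rm' = 1 := by rw [← map_mul, hR, map_one]
  have h2 : ι₁₃ R B Rm' * ι₁₃ R B Rm = 1 := by rw [← map_mul, hR', map_one]
  have key : (conj R (ι₁₃ R B Rm) (ι₁₃ R B Rm') h1 h2).comp ((s₁₂ R B).comp (Δ₂ R B)) =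
      (Q R B).comp (Δ₂ R B) := by
    ext b
    · simp only [AlgHom.comp_apply, Algebra.TensorProduct.includeLeft_apply, conj_apply,
        Δ₂_left]
      have e1 : s₁₂ R B (b ⊗ₜ (1 : B ⊗[R] B)) = (1 : B) ⊗ₜ (b ⊗ₜ (1 : B)) := by
        simp [s₁₂, τ, Algebra.TensorProduct.one_def]
      have e2 : Q R B (b ⊗ₜ (1 : B ⊗[R] B)) = (1 : B) ⊗ₜ (b ⊗ₜ (1 : B)) := by
        simp [Q, τ, Algebra.TensorProduct.one_def]
      rw [e1, e2, comm13, mul_assoc, h1, mul_one]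
    · simp only [AlgHom.restrictScalars_apply, AlgHom.comp_apply, Algebra.TensorProduct.includeRight_apply, conj_apply,
        Δ₂_right, s₁₂_ι₂₃, ← map_mul, ← hqc, Q_ι₂₃]
  exact DFunLike.congr_fun key x

end inter
lemma P_Δ₂ (x : B ⊗[R] B) : P R B (Δ₂ R B x) = Δ₁ R B (τ R B x) := by
  have key : (P R B).comp (Δ₂ R B) = (Δ₁ R B).comp (τ R B).toAlgHom := by
    ext b
    · simp only [AlgHom.comp_apply, Algebra.TensorProduct.includeLeft_apply,
        AlgEquiv.toAlgHom_eq_coe, AlgHom.coe_coe, Δ₂_left]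
      have : (τ R B : B ⊗[R] B →ₐ[R] B ⊗[R] B) (b ⊗ₜ (1 : B)) = (1 : B) ⊗ₜ b := by simp [τ]
      rw [this, Δ₁_right]
      simp [P, τ, Algebra.TensorProduct.one_def]
    · simp only [AlgHom.restrictScalars_apply, AlgHom.comp_apply,
        Algebra.TensorProduct.includeRight_apply, AlgEquiv.toAlgHom_eq_coe, AlgHom.coe_coe,
        Δ₂_right, P_ι₂₃]
      have : (τ R B : B ⊗[R] B →ₐ[R] B ⊗[R] B) ((1 : B) ⊗ₜ b) = b ⊗ₜ (1 : B) := by simp [τ]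
      rw [this, Δ₁_left]
  exact DFunLike.congr_fun key x

lemma Q_Δ₁ (x : B ⊗[R] B) : Q R B (Δ₁ R B x) = Δ₂ R B (τ R B x) := by
  have key : (Q R B).comp (Δ₁ R B) = (Δ₂ R B).comp (τ R B).toAlgHom := by
    ext b
    · simp only [AlgHom.comp_apply, Algebra.TensorProduct.includeLeft_apply,
        AlgEquiv.toAlgHom_eq_coe, AlgHom.coe_coe, Δ₁_left, Q_ι₁₂]
      have : (τ R B : B ⊗[R] B →ₐ[R] B ⊗[R] B) (b ⊗ₜ (1 : B)) = (1 : B) ⊗ₜ b := by simp [τ]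
      rw [this, Δ₂_right]
    · simp only [AlgHom.restrictScalars_apply, AlgHom.comp_apply,
        Algebra.TensorProduct.includeRight_apply, AlgEquiv.toAlgHom_eq_coe, AlgHom.coe_coe,
        Δ₁_right]
      have : (τ R B : B ⊗[R] B →ₐ[R] B ⊗[R] B) ((1 : B) ⊗ₜ b) = b ⊗ₜ (1 : B) := by simp [τ]
      rw [this, Δ₂_left]
      simp [Q, τ, Algebra.TensorProduct.one_def]
  exact DFunLike.congr_fun key x

lemma DeltaF_apply (F Finv : B ⊗[R] B) (b : B) :
    DeltaF R B F Finv b = F * Δ R B b * Finv := rfl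

lemma Br1 (F Finv : B ⊗[R] B) (x : B ⊗[R] B) :
    (TensorProduct.assoc R B B B) ((TensorProduct.map (DeltaF R B F Finv) LinearMap.id) x) =
      ι₁₂ R B F * Δ₁ R B x * ι₁₂ R B Finv := by
  induction x using TensorProduct.induction_on with
  | zero => simp
  | tmul a b =>
      have h1 : (TensorProduct.map (DeltaF R B F Finv) LinearMap.id) (a ⊗ₜ b) =
          (F * Δ R B a * Finv) ⊗ₜ b := by simp [DeltaF_apply]
      have h2 : (F * Δ R B a * Finv) ⊗ₜ b =
          (F ⊗ₜ[R] (1 : B)) * ((Δ R B a) ⊗ₜ[R] b) * (Finv ⊗ₜ[R] (1 : B)) := by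
        simp [Algebra.TensorProduct.tmul_mul_tmul]
      have h3 : Δ₁ R B (a ⊗ₜ b) = (TensorProduct.assoc R B B B) ((Δ R B a) ⊗ₜ b) := by
        simp [Δ₁]
        rfl
      have h4 : ∀ z : (B ⊗[R] B) ⊗[R] B, (TensorProduct.assoc R B B B) z =
          (Algebra.TensorProduct.assoc R R R B B B) z := fun _ => rfl
      rw [h1, h2, h4, map_mul, map_mul, h3, h4, assoc_tmul_one, assoc_tmul_one]
  | add x y hx hy => simp only [map_add, hx, hy, mul_add, add_mul]

lemma Br2 (F Finv : B ⊗[R] B) (x : B ⊗[R] B) :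
    (TensorProduct.map LinearMap.id (DeltaF R B F Finv)) x =
      ι₂₃ R B F * Δ₂ R B x * ι₂₃ R B Finv := by
  induction x using TensorProduct.induction_on with
  | zero => simp
  | tmul a b =>
      have h1 : (TensorProduct.map LinearMap.id (DeltaF R B F Finv)) (a ⊗ₜ b) =
          a ⊗ₜ (F * Δ R B b * Finv) := by simp [DeltaF_apply]
      rw [h1]
      have h2 : a ⊗ₜ (F * Δ R B b * Finv) =
          ((1 : B) ⊗ₜ[R] F) * (a ⊗ₜ[R] (Δ R B b)) * ((1 : B) ⊗ₜ[R] Finv) := by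
        simp [Algebra.TensorProduct.tmul_mul_tmul]
      rw [h2]
      rfl
  | add x y hx hy => simp only [map_add, hx, hy, mul_add, add_mul]
set_option maxHeartbeats 2000000 in
/-- **Twisting a universal R-matrix.**  If `F` is a Drinfel'd twist (with two-sided
inverse `Finv`) and `Rm` a universal R-matrix (with two-sided inverse `Rm'`) on a
bialgebra `B`, then `R_F = F₂₁ · Rm · F⁻¹` has a two-sided inverse and is a universal
R-matrix on the twisted bialgebra `(B, Δ_F, ε)`; if `Rm` is triangular then so is
`R_F`. -/
theorem twisted_R_matrix
    (F Finv Rm Rm' : B ⊗[R] B)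
    -- `F` is a Drinfel'd twist:
    (hF : F * Finv = 1) (hF' : Finv * F = 1)
    (hnorm₁ : ε₁ R B F = 1) (hnorm₂ : ε₂ R B F = 1)
    (hcoc : ι₁₂ R B F * Δ₁ R B F = ι₂₃ R B F * Δ₂ R B F)
    -- `Rm` is a universal R-matrix:
    (hR : Rm * Rm' = 1) (hR' : Rm' * Rm = 1)
    (hqc : ∀ b : B, τ R B (Δ R B b) = Rm * Δ R B b * Rm')
    (hhex₁ : Δ₁ R B Rm = ι₁₃ R B Rm * ι₂₃ R B Rm)
    (hhex₂ : Δ₂ R B Rm = ι₁₃ R B Rm * ι₁₂ R B Rm) :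
    ∃ RFinv : B ⊗[R] B,
      -- `R_F` is invertible:
      RF R B F Finv Rm * RFinv = 1 ∧ RFinv * RF R B F Finv Rm = 1 ∧
      -- quasi-cocommutativity of `Δ_F` with respect to `R_F`:
      (∀ b : B,
        τ R B (DeltaF R B F Finv b) = RF R B F Finv Rm * DeltaF R B F Finv b * RFinv) ∧
      -- hexagon relations for `R_F` with respect to `Δ_F`:
      (TensorProduct.assoc R B B B)
          ((TensorProduct.map (DeltaF R B F Finv) LinearMap.id) (RF R B F Finv Rm)) =
        ι₁₃ R B (RF R B F Finv Rm) * ι₂₃ R B (RF R B F Finv Rm) ∧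
      (TensorProduct.map LinearMap.id (DeltaF R B F Finv)) (RF R B F Finv Rm) =
        ι₁₃ R B (RF R B F Finv Rm) * ι₁₂ R B (RF R B F Finv Rm) ∧
      -- if `Rm` is triangular, so is `R_F`:
      (τ R B Rm = Rm' → τ R B (RF R B F Finv Rm) = RFinv) := by
  have hRF : RF R B F Finv Rm = τ R B F * Rm * Finv := rfl
  have hDF : ∀ b : B, DeltaF R B F Finv b = F * Δ R B b * Finv := DeltaF_apply F Finv

  have hcocP : ι₁₃ R B (τ R B F) * P R B (Δ₁ R B F) = ι₁₂ R B F * Δ₁ R B (τ R B F) := by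
    have h := congrArg (P R B) hcoc
    rw [map_mul, map_mul, P_ι₁₂, P_ι₂₃, P_Δ₂] at h
    exact h
  have hcocQ : ι₂₃ R B F * Δ₂ R B (τ R B F) = ι₁₃ R B (τ R B F) * Q R B (Δ₂ R B F) := by
    have h := congrArg (Q R B) hcoc
    rw [map_mul, map_mul, Q_ι₁₂, Q_ι₂₃, Q_Δ₁] at h
    exact h
  have hinv : Δ₁ R B Finv * ι₁₂ R B Finv = Δ₂ R B Finv * ι₂₃ R B Finv := by
    apply left_inv_eq_right_inv (a := ι₁₂ R B F * Δ₁ R B F)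
    · calc Δ₁ R B Finv * ι₁₂ R B Finv * (ι₁₂ R B F * Δ₁ R B F)
          = Δ₁ R B Finv * (ι₁₂ R B Finv * ι₁₂ R B F) * Δ₁ R B F := by
            simp only [mul_assoc]
        _ = 1 := by rw [← map_mul, hF', map_one, mul_one, ← map_mul, hF', map_one]
    · calc ι₁₂ R B F * Δ₁ R B F * (Δ₂ R B Finv * ι₂₃ R B Finv)
          = ι₂₃ R B F * (Δ₂ R B F * Δ₂ R B Finv) * ι₂₃ R B Finv := by
            rw [hcoc]; simp only [mul_assoc]
        _ = 1 := by rw [← map_mul, hF, map_one, mul_one, ← map_mul, hF, map_one]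
  have hprod1 : Δ₁ R B F * Δ₂ R B Finv = ι₁₂ R B Finv * ι₂₃ R B F := by
    calc Δ₁ R B F * Δ₂ R B Finv
        = (ι₁₂ R B Finv * ι₁₂ R B F) * Δ₁ R B F * Δ₂ R B Finv := by
          rw [← map_mul, hF', map_one, one_mul]
      _ = ι₁₂ R B Finv * (ι₁₂ R B F * Δ₁ R B F) * Δ₂ R B Finv := by
          simp only [mul_assoc]
      _ = ι₁₂ R B Finv * (ι₂₃ R B F * Δ₂ R B F) * Δ₂ R B Finv := by rw [hcoc]
      _ = ι₁₂ R B Finv * (ι₂₃ R B F * (Δ₂ R B F * Δ₂ R B Finv)) := by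
          simp only [mul_assoc]
      _ = ι₁₂ R B Finv * ι₂₃ R B F := by rw [← map_mul, hF, map_one, mul_one]
  have hprod2 : Δ₂ R B F * Δ₁ R B Finv = ι₂₃ R B Finv * ι₁₂ R B F := by
    calc Δ₂ R B F * Δ₁ R B Finv
        = (ι₂₃ R B Finv * ι₂₃ R B F) * Δ₂ R B F * Δ₁ R B Finv := by
          rw [← map_mul, hF', map_one, one_mul]
      _ = ι₂₃ R B Finv * (ι₂₃ R B F * Δ₂ R B F) * Δ₁ R B Finv := by
          simp only [mul_assoc]
      _ = ι₂₃ R B Finv * (ι₁₂ R B F * Δ₁ R B F) * Δ₁ R B Finv := by rw [hcoc]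
      _ = ι₂₃ R B Finv * (ι₁₂ R B F * (Δ₁ R B F * Δ₁ R B Finv)) := by
          simp only [mul_assoc]
      _ = ι₂₃ R B Finv * ι₁₂ R B F := by rw [← map_mul, hF, map_one, mul_one]
  have hswap23 : ι₂₃ R B Rm * Δ₂ R B Finv = s₂₃ R B (Δ₂ R B Finv) * ι₂₃ R B Rm := by
    calc ι₂₃ R B Rm * Δ₂ R B Finv
        = (ι₂₃ R B Rm * Δ₂ R B Finv * ι₂₃ R B Rm') * ι₂₃ R B Rm := by
          rw [mul_assoc, mul_assoc, ← map_mul (ι₂₃ R B) Rm' Rm, hR', map_one, mul_one]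
      _ = _ := congrArg (· * ι₂₃ R B Rm) (inter23 Rm Rm' hR hR' hqc Finv)
  have hswap12 : ι₁₂ R B Rm * Δ₁ R B Finv = s₁₂ R B (Δ₁ R B Finv) * ι₁₂ R B Rm := by
    calc ι₁₂ R B Rm * Δ₁ R B Finv
        = (ι₁₂ R B Rm * Δ₁ R B Finv * ι₁₂ R B Rm') * ι₁₂ R B Rm := by
          rw [mul_assoc, mul_assoc, ← map_mul (ι₁₂ R B) Rm' Rm, hR', map_one, mul_one]
      _ = _ := congrArg (· * ι₁₂ R B Rm) (inter12 Rm Rm' hR hR' hqc Finv)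
  refine ⟨F * Rm' * τ R B Finv, ?_, ?_, ?_, ?_, ?_, ?_⟩
  case _ =>
    have hcan : ∀ z : B ⊗[R] B, Finv * (F * z) = z := fun z => by
      rw [← mul_assoc, hF', one_mul]
    have hRcan : ∀ z : B ⊗[R] B, Rm * (Rm' * z) = z := fun z => by
      rw [← mul_assoc, hR, one_mul]
    have hτ : τ R B F * τ R B Finv = 1 := by rw [← map_mul, hF, map_one]
    rw [hRF]
    simp only [mul_assoc, hcan, hRcan]
    exact hτ
  case _ =>
    have hcan : ∀ z : B ⊗[R] B, τ R B Finv * (τ R B F * z) = z := fun z => by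
      rw [← mul_assoc, ← map_mul, hF', map_one, one_mul]
    have hRcan : ∀ z : B ⊗[R] B, Rm' * (Rm * z) = z := fun z => by
      rw [← mul_assoc, hR', one_mul]
    rw [hRF]
    simp only [mul_assoc, hcan, hRcan]
    exact hF
  case _ =>
    intro b
    have hcan : ∀ z : B ⊗[R] B, Finv * (F * z) = z := fun z => by
      rw [← mul_assoc, hF', one_mul]
    rw [hRF, hDF, map_mul, map_mul, hqc b]
    simp only [mul_assoc, hcan]
  case _ =>
    -- hexagon 1
    have h1331 : ∀ z : B ⊗[R] (B ⊗[R] B), ι₁₃ R B Rm' * (ι₁₃ R B Rm * z) = z := fun z => by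
      rw [← mul_assoc, ← map_mul, hR', map_one, one_mul]
    have hcocP' : ∀ z, ι₁₂ R B F * (Δ₁ R B (τ R B F) * z)
        = ι₁₃ R B (τ R B F) * (P R B (Δ₁ R B F) * z) := fun z => by
      rw [← mul_assoc, ← hcocP, mul_assoc]
    have hP' : ∀ z, P R B (Δ₁ R B F) * z
        = ι₁₃ R B Rm * (s₂₃ R B (Δ₁ R B F) * (ι₁₃ R B Rm' * z)) := fun z => by
      rw [← mul_assoc, ← mul_assoc, inter13P Rm Rm' hR hR' hqc F]
    have hswap23' : ∀ z, ι₂₃ R B Rm * (Δ₂ R B Finv * z)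
        = s₂₃ R B (Δ₂ R B Finv) * (ι₂₃ R B Rm * z) := fun z => by
      rw [← mul_assoc, hswap23, mul_assoc]
    have hmerge : ∀ z, s₂₃ R B (Δ₁ R B F) * (s₂₃ R B (Δ₂ R B Finv) * z)
        = ι₁₃ R B Finv * (ι₂₃ R B (τ R B F) * z) := fun z => by
      rw [← mul_assoc, ← map_mul, hprod1, map_mul, s₂₃_ι₁₂, s₂₃_ι₂₃, mul_assoc]
    rw [Br1]
    simp only [hRF, map_mul, hhex₁, mul_assoc]
    rw [hinv, hswap23', hcocP', hP', h1331, hmerge]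
  case _ =>
    -- hexagon 2
    have h1331 : ∀ z : B ⊗[R] (B ⊗[R] B), ι₁₃ R B Rm' * (ι₁₃ R B Rm * z) = z := fun z => by
      rw [← mul_assoc, ← map_mul, hR', map_one, one_mul]
    have hcocQ' : ∀ z, ι₂₃ R B F * (Δ₂ R B (τ R B F) * z)
        = ι₁₃ R B (τ R B F) * (Q R B (Δ₂ R B F) * z) := fun z => by
      rw [← mul_assoc, hcocQ, mul_assoc]
    have hQ' : ∀ z, Q R B (Δ₂ R B F) * z
        = ι₁₃ R B Rm * (s₁₂ R B (Δ₂ R B F) * (ι₁₃ R B Rm' * z)) := fun z => by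
      rw [← mul_assoc, ← mul_assoc, inter13Q Rm Rm' hR hR' hqc F]
    have hswap12' : ∀ z, ι₁₂ R B Rm * (Δ₁ R B Finv * z)
        = s₁₂ R B (Δ₁ R B Finv) * (ι₁₂ R B Rm * z) := fun z => by
      rw [← mul_assoc, hswap12, mul_assoc]
    have hmerge2 : ∀ z, s₁₂ R B (Δ₂ R B F) * (s₁₂ R B (Δ₁ R B Finv) * z)
        = ι₁₃ R B Finv * (ι₁₂ R B (τ R B F) * z) := fun z => by
      rw [← mul_assoc, ← map_mul, hprod2, map_mul, s₁₂_ι₂₃, s₁₂_ι₁₂, mul_assoc]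
    rw [Br2]
    simp only [hRF, map_mul, hhex₂, mul_assoc]
    rw [← hinv, hswap12', hcocQ', hQ', h1331, hmerge2]
  case _ =>
    intro h
    rw [hRF, map_mul, map_mul, tau_tau, h, mul_assoc]

end Stmt
end
end

section
/- Let B be a cocommutative bialgebra over a commutative ring k (τ∘Δ = Δ) and let F = Σ_{n≥0} ħⁿ Fₙ ∈ (B⊗B)[[ħ]] be a formal Drinfel'd twist with F₀ = 1⊗1: F is normalized ((ε⊗id)(F) = 1 = (id⊗ε)(F), coefficientwise) and satisfies the 2-cocycle condition (F⊗1)·((Δ⊗id)(F)) = (1⊗F)·((id⊗Δ)(F)) in (B⊗B⊗B)[[ħ]]. Then the skew-symmetrization of its first-order coefficient, r := τ(F₁) − F₁ ∈ B⊗B, satisfies (Δ⊗id)(r) = r₁₃ + r₂₃ and (id⊗Δ)(r) = r₁₃ + r₁₂, and it satisfies the classical Yang–Baxter equation [r₁₂, r₁₃] + [r₁₂, r₂₃] + [r₁₃, r₂₃] = 0 in B⊗B⊗B, where [·,·] is the commutator of the algebra B⊗B⊗B. -/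
set_option maxHeartbeats 2000000

open TensorProduct

noncomputable section

namespace Stmt

variable (R : Type*) [CommRing R] (B : Type*) [Ring B] [Bialgebra R B]

/-- The skew-symmetrization `r := τ(F₁) − F₁` of the first-order coefficient of a
formal power series `F` with coefficients in `B ⊗ B`. -/
def rOf (F : PowerSeries (B ⊗[R] B)) : B ⊗[R] B :=
  τ R B (PowerSeries.coeff 1 F) - PowerSeries.coeff 1 F

/-! ### Auxiliary machinery -/

/-- Flip of the last two tensor factors of `B ⊗ (B ⊗ B)`. -/
def s23 : B ⊗[R] (B ⊗[R] B) ≃ₐ[R] B ⊗[R] (B ⊗[R] B) :=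
  Algebra.TensorProduct.congr AlgEquiv.refl (Algebra.TensorProduct.comm R B B)

/-- Flip of the first two tensor factors of `B ⊗ (B ⊗ B)`. -/
def s12 : B ⊗[R] (B ⊗[R] B) ≃ₐ[R] B ⊗[R] (B ⊗[R] B) :=
  (Algebra.TensorProduct.assoc R R R B B B).symm.trans
    ((Algebra.TensorProduct.congr (Algebra.TensorProduct.comm R B B) AlgEquiv.refl).trans
      (Algebra.TensorProduct.assoc R R R B B B))

variable {R B}

lemma s12_i12 (x : B ⊗[R] B) : s12 R B (ι₁₂ R B x) = ι₁₂ R B (τ R B x) := by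
  have h : (s12 R B).toAlgHom.comp (ι₁₂ R B) = (ι₁₂ R B).comp (τ R B).toAlgHom := by
    ext a <;> simp [s12, ι₁₂, τ, Algebra.TensorProduct.one_def]
  exact congrFun (congrArg DFunLike.coe h) x

lemma s12_i13 (x : B ⊗[R] B) : s12 R B (ι₁₃ R B x) = ι₂₃ R B x := by
  have h : (s12 R B).toAlgHom.comp (ι₁₃ R B) = ι₂₃ R B := by
    ext a <;> simp [s12, ι₁₃, ι₂₃, τ, Algebra.TensorProduct.one_def]
  exact congrFun (congrArg DFunLike.coe h) x

lemma s12_i23 (x : B ⊗[R] B) : s12 R B (ι₂₃ R B x) = ι₁₃ R B x := by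
  have h : (s12 R B).toAlgHom.comp (ι₂₃ R B) = ι₁₃ R B := by
    ext a <;> simp [s12, ι₁₃, ι₂₃, τ, Algebra.TensorProduct.one_def]
  exact congrFun (congrArg DFunLike.coe h) x

lemma s23_i12 (x : B ⊗[R] B) : s23 R B (ι₁₂ R B x) = ι₁₃ R B x := by
  have h : (s23 R B).toAlgHom.comp (ι₁₂ R B) = ι₁₃ R B := by
    ext a <;> simp [s23, ι₁₂, ι₁₃, τ, Algebra.TensorProduct.one_def]
  exact congrFun (congrArg DFunLike.coe h) x

lemma s23_i13 (x : B ⊗[R] B) : s23 R B (ι₁₃ R B x) = ι₁₂ R B x := by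
  have h : (s23 R B).toAlgHom.comp (ι₁₃ R B) = ι₁₂ R B := by
    ext a <;> simp [s23, ι₁₂, ι₁₃, τ, Algebra.TensorProduct.one_def]
  exact congrFun (congrArg DFunLike.coe h) x

lemma s23_i23 (x : B ⊗[R] B) : s23 R B (ι₂₃ R B x) = ι₂₃ R B (τ R B x) := by
  have h : (s23 R B).toAlgHom.comp (ι₂₃ R B) = (ι₂₃ R B).comp (τ R B).toAlgHom := by
    ext a <;> simp [s23, ι₂₃, τ, Algebra.TensorProduct.one_def]
  exact congrFun (congrArg DFunLike.coe h) x

lemma s12_s12 (x : B ⊗[R] (B ⊗[R] B)) : s12 R B (s12 R B x) = x := by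
  have h : (s12 R B).toAlgHom.comp (s12 R B).toAlgHom = AlgHom.id R _ := by
    ext a <;> simp [s12, Algebra.TensorProduct.one_def]
  exact congrFun (congrArg DFunLike.coe h) x

lemma s23_s23 (x : B ⊗[R] (B ⊗[R] B)) : s23 R B (s23 R B x) = x := by
  have h : (s23 R B).toAlgHom.comp (s23 R B).toAlgHom = AlgHom.id R _ := by
    ext a <;> simp [s23, Algebra.TensorProduct.one_def]
  exact congrFun (congrArg DFunLike.coe h) x

lemma s12_assoc (y : B ⊗[R] B) :
    s12 R B ((Algebra.TensorProduct.assoc R R R B B B) (y ⊗ₜ[R] (1:B))) =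
      (Algebra.TensorProduct.assoc R R R B B B) ((τ R B y) ⊗ₜ[R] (1:B)) := by
  induction y using TensorProduct.induction_on with
  | zero => simp
  | tmul p q => simp [s12, τ]
  | add x y hx hy => simp only [add_tmul, map_add, hx, hy]

lemma s23_assoc (y : B ⊗[R] B) :
    s23 R B ((Algebra.TensorProduct.assoc R R R B B B) (y ⊗ₜ[R] (1:B))) =
      s12 R B ((1:B) ⊗ₜ[R] y) := by
  induction y using TensorProduct.induction_on with
  | zero => simp
  | tmul p q => simp [s12, s23, τ]
  | add x y hx hy => simp only [add_tmul, tmul_add, map_add, hx, hy]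

lemma P7 (x : B ⊗[R] B) : s23 R B (Δ₁ R B x) = s12 R B (Δ₂ R B (τ R B x)) := by
  have h : (s23 R B).toAlgHom.comp (Δ₁ R B) =
      (s12 R B).toAlgHom.comp ((Δ₂ R B).comp (τ R B).toAlgHom) := by
    ext a
    · simp only [AlgHom.restrictScalars_apply, AlgHom.coe_comp, AlgEquiv.toAlgHom_eq_coe,
        AlgHom.coe_coe, Function.comp_apply, Δ₁, Δ₂, τ,
        Algebra.TensorProduct.includeLeft_apply, Algebra.TensorProduct.map_tmul,
        AlgHom.coe_id, id_eq, Algebra.TensorProduct.comm_tmul, AlgEquiv.coe_toAlgHom]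
      rw [s23_assoc]
    · simp [Δ₁, Δ₂, Δ, s12, s23, τ, Algebra.TensorProduct.one_def,
        Algebra.TensorProduct.congr_apply]
  exact congrFun (congrArg DFunLike.coe h) x

section Cocomm
variable (hcc : ∀ b : B, τ R B (Coalgebra.comul (R := R) b) = Coalgebra.comul (R := R) b)
include hcc

lemma C1 (x : B ⊗[R] B) : s12 R B (Δ₁ R B x) = Δ₁ R B x := by
  have h : (s12 R B).toAlgHom.comp (Δ₁ R B) = Δ₁ R B := by
    ext a
    · simp only [AlgHom.coe_comp, AlgEquiv.toAlgHom_eq_coe, AlgHom.coe_coe,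
        Function.comp_apply, Δ₁, Algebra.TensorProduct.includeLeft_apply,
        Algebra.TensorProduct.map_tmul, AlgHom.coe_id, id_eq, AlgEquiv.coe_toAlgHom]
      rw [s12_assoc]
      congr 1
      rw [show (Δ R B) a = Coalgebra.comul (R := R) a from by
        simp [Δ, Bialgebra.comulAlgHom_apply], hcc a]
    · simp [Δ₁, Δ, s12, Algebra.TensorProduct.one_def]
  exact congrFun (congrArg DFunLike.coe h) x

lemma C2 (x : B ⊗[R] B) : s23 R B (Δ₂ R B x) = Δ₂ R B x := by
  have h : (s23 R B).toAlgHom.comp (Δ₂ R B) = Δ₂ R B := by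
    ext a
    · simp [Δ₂, Δ, s23, Algebra.TensorProduct.one_def]
    · have := hcc a
      simp only [τ] at this
      simp [Δ₂, Δ, s23, Algebra.TensorProduct.congr_apply, this]
  exact congrFun (congrArg DFunLike.coe h) x

end Cocomm

lemma coeff_one_mul {A : Type*} [Ring A] (P Q : PowerSeries A) :
    PowerSeries.coeff 1 (P * Q) = PowerSeries.coeff 0 P * PowerSeries.coeff 1 Q +
      PowerSeries.coeff 1 P * PowerSeries.coeff 0 Q := by
  rw [PowerSeries.coeff_mul, Finset.Nat.sum_antidiagonal_eq_sum_range_succ_mk]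
  simp [Finset.sum_range_succ]

lemma coeff_two_mul {A : Type*} [Ring A] (P Q : PowerSeries A) :
    PowerSeries.coeff 2 (P * Q) = PowerSeries.coeff 0 P * PowerSeries.coeff 2 Q +
      PowerSeries.coeff 1 P * PowerSeries.coeff 1 Q +
      PowerSeries.coeff 2 P * PowerSeries.coeff 0 Q := by
  rw [PowerSeries.coeff_mul, Finset.Nat.sum_antidiagonal_eq_sum_range_succ_mk]
  simp [Finset.sum_range_succ, add_assoc]

/-- **Semiclassical limit of a formal Drinfel'd twist.**  If `B` is cocommutative
and `F` is a formal Drinfel'd twist with constant coefficient `1⊗1`, then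
`r = τ(F₁) − F₁` satisfies `(Δ⊗id)(r) = r₁₃ + r₂₃`, `(id⊗Δ)(r) = r₁₃ + r₁₂` and the
classical Yang–Baxter equation. -/
theorem first_order_of_twist
    (hcc : ∀ b : B, τ R B (Coalgebra.comul (R := R) b) = Coalgebra.comul (R := R) b)
    (F : PowerSeries (B ⊗[R] B))
    (h0 : PowerSeries.constantCoeff F = 1)
    (hnorm₁ : PowerSeries.map (ε₁ R B).toRingHom F = 1)
    (hnorm₂ : PowerSeries.map (ε₂ R B).toRingHom F = 1)
    (hcoc : PowerSeries.map (ι₁₂ R B).toRingHom F *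
        PowerSeries.map (Δ₁ R B).toRingHom F =
      PowerSeries.map (ι₂₃ R B).toRingHom F *
        PowerSeries.map (Δ₂ R B).toRingHom F) :
    Δ₁ R B (rOf R B F) = ι₁₃ R B (rOf R B F) + ι₂₃ R B (rOf R B F) ∧
    Δ₂ R B (rOf R B F) = ι₁₃ R B (rOf R B F) + ι₁₂ R B (rOf R B F) ∧
    (ι₁₂ R B (rOf R B F) * ι₁₃ R B (rOf R B F) -
        ι₁₃ R B (rOf R B F) * ι₁₂ R B (rOf R B F)) +
      (ι₁₂ R B (rOf R B F) * ι₂₃ R B (rOf R B F) -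
        ι₂₃ R B (rOf R B F) * ι₁₂ R B (rOf R B F)) +
      (ι₁₃ R B (rOf R B F) * ι₂₃ R B (rOf R B F) -
        ι₂₃ R B (rOf R B F) * ι₁₃ R B (rOf R B F)) = 0 := by
  clear hnorm₁ hnorm₂
  set f : B ⊗[R] B := PowerSeries.coeff 1 F with hfdef
  set g : B ⊗[R] B := PowerSeries.coeff 2 F with hgdef
  set t : B ⊗[R] B := τ R B f with htdef
  set u : B ⊗[R] B := τ R B g with hudef
  have hrr : rOf R B F = t - f := rfl
  -- coefficient extraction
  have hc0 : PowerSeries.coeff 0 F = 1 := by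
    rw [PowerSeries.coeff_zero_eq_constantCoeff, h0]
  have e1 : Δ₁ R B f + ι₁₂ R B f = Δ₂ R B f + ι₂₃ R B f := by
    have h := congrArg (PowerSeries.coeff 1) hcoc
    rw [coeff_one_mul, coeff_one_mul] at h
    simp only [PowerSeries.coeff_map, hc0, ← hfdef, map_one, one_mul, mul_one,
      AlgHom.coe_toRingHom] at h
    exact h
  have e2 : Δ₁ R B g + ι₁₂ R B f * Δ₁ R B f + ι₁₂ R B g =
      Δ₂ R B g + ι₂₃ R B f * Δ₂ R B f + ι₂₃ R B g := by
    have h := congrArg (PowerSeries.coeff 2) hcoc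
    rw [coeff_two_mul, coeff_two_mul] at h
    simp only [PowerSeries.coeff_map, hc0, ← hfdef, ← hgdef, map_one, one_mul, mul_one,
      AlgHom.coe_toRingHom] at h
    exact h
  -- P7 instances
  have p7f : s23 R B (Δ₁ R B f) = s12 R B (Δ₂ R B t) := P7 f
  have p7t : s23 R B (Δ₁ R B t) = s12 R B (Δ₂ R B f) := by
    rw [P7 t, htdef, tau_tau]
  have p7g : s23 R B (Δ₁ R B g) = s12 R B (Δ₂ R B u) := P7 g
  have p7u : s23 R B (Δ₁ R B u) = s12 R B (Δ₂ R B g) := by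
    rw [P7 u, hudef, tau_tau]
  -- permuted first-order cocycle
  have hA : s12 R B (Δ₂ R B t) + ι₁₃ R B f = Δ₂ R B f + ι₂₃ R B t := by
    have h := congrArg (s23 R B) e1
    rw [map_add, map_add, p7f, s23_i12, C2 hcc, s23_i23] at h
    exact h
  have hB : Δ₁ R B f + ι₁₂ R B t = s23 R B (Δ₁ R B t) + ι₁₃ R B f := by
    have h := congrArg (s12 R B) e1
    rw [map_add, map_add, C1 hcc, s12_i12, ← p7t, s12_i23] at h
    exact h
  have hB' : s12 R B (Δ₂ R B t) + ι₁₃ R B t = Δ₁ R B t + ι₁₂ R B f := by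
    have h := congrArg (s23 R B) hB
    rw [map_add, map_add, p7f, s23_i12, s23_s23, s23_i13] at h
    exact h
  have hA' : Δ₂ R B t + ι₂₃ R B f = s23 R B (Δ₁ R B t) + ι₁₃ R B t := by
    have h := congrArg (s12 R B) hA
    rw [map_add, map_add, s12_s12, s12_i13, ← p7t, s12_i23] at h
    exact h
  -- goal 1
  have goal1 : Δ₁ R B (rOf R B F) = ι₁₃ R B (rOf R B F) + ι₂₃ R B (rOf R B F) := by
    rw [hrr, map_sub, map_sub, map_sub]
    linear_combination (norm := noncomm_ring) hA - hB' - e1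
  -- goal 2
  have goal2 : Δ₂ R B (rOf R B F) = ι₁₃ R B (rOf R B F) + ι₁₂ R B (rOf R B F) := by
    rw [hrr, map_sub, map_sub, map_sub]
    linear_combination (norm := noncomm_ring) hA' - hB + e1
  -- permuted second-order cocycle
  have E1 : Δ₁ R B g + ι₁₂ R B t * Δ₁ R B f + ι₁₂ R B u =
      s23 R B (Δ₁ R B u) + ι₁₃ R B f * s23 R B (Δ₁ R B t) + ι₁₃ R B g := by
    have h := congrArg (s12 R B) e2
    rw [map_add, map_add, map_add, map_add, map_mul, map_mul, C1 hcc, C1 hcc,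
      s12_i12, s12_i12, ← p7u, ← p7t, s12_i23, s12_i23] at h
    exact h
  have E2 : s12 R B (Δ₂ R B u) + ι₁₃ R B f * s12 R B (Δ₂ R B t) + ι₁₃ R B g =
      Δ₂ R B g + ι₂₃ R B t * Δ₂ R B f + ι₂₃ R B u := by
    have h := congrArg (s23 R B) e2
    rw [map_add, map_add, map_add, map_add, map_mul, map_mul, p7g, p7f,
      s23_i12, s23_i12, C2 hcc, C2 hcc, s23_i23, s23_i23] at h
    exact h
  have E3 : s12 R B (Δ₂ R B u) + ι₁₃ R B t * s12 R B (Δ₂ R B t) + ι₁₃ R B u =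
      Δ₁ R B u + ι₁₂ R B f * Δ₁ R B t + ι₁₂ R B g := by
    have h := congrArg (s23 R B) E1
    rw [map_add, map_add, map_add, map_add, map_mul, map_mul, p7g, p7f,
      s23_i12, s23_i12, s23_s23, s23_s23, s23_i13, s23_i13] at h
    exact h
  have E4 : Δ₂ R B u + ι₂₃ R B f * Δ₂ R B t + ι₂₃ R B g =
      s23 R B (Δ₁ R B u) + ι₁₃ R B t * s23 R B (Δ₁ R B t) + ι₁₃ R B u := by
    have h := congrArg (s12 R B) E2
    rw [map_add, map_add, map_add, map_add, map_mul, map_mul, s12_s12, s12_s12,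
      s12_i13, s12_i13, ← p7u, ← p7t, s12_i23, s12_i23] at h
    exact h
  have E5 : Δ₂ R B u + ι₂₃ R B t * Δ₂ R B t + ι₂₃ R B u =
      Δ₁ R B u + ι₁₂ R B t * Δ₁ R B t + ι₁₂ R B u := by
    have h := congrArg (s12 R B) E3
    rw [map_add, map_add, map_add, map_add, map_mul, map_mul, s12_s12, s12_s12,
      s12_i13, s12_i13, C1 hcc, C1 hcc, s12_i12, s12_i12] at h
    exact h
  -- the key quadratic identity, expanded form (additive in product atoms)
  have keyE : ι₁₂ R B t * Δ₁ R B t - ι₁₂ R B t * Δ₁ R B f - ι₁₂ R B f * Δ₁ R B t +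
      ι₁₂ R B f * Δ₁ R B f + ι₁₃ R B t * s12 R B (Δ₂ R B t) -
      ι₁₃ R B t * s23 R B (Δ₁ R B t) - ι₁₃ R B f * s12 R B (Δ₂ R B t) +
      ι₁₃ R B f * s23 R B (Δ₁ R B t) - ι₂₃ R B t * Δ₂ R B t + ι₂₃ R B t * Δ₂ R B f +
      ι₂₃ R B f * Δ₂ R B t - ι₂₃ R B f * Δ₂ R B f = 0 := by
    linear_combination (norm := abel1) e2 - E1 - E2 + E3 + E4 - E5
  have key2 : (ι₁₂ R B t - ι₁₂ R B f) * (Δ₁ R B t - Δ₁ R B f) +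
      (ι₁₃ R B t - ι₁₃ R B f) * (s12 R B (Δ₂ R B t) - s23 R B (Δ₁ R B t)) -
      (ι₂₃ R B t - ι₂₃ R B f) * (Δ₂ R B t - Δ₂ R B f) = 0 := by
    have hfac : (ι₁₂ R B t - ι₁₂ R B f) * (Δ₁ R B t - Δ₁ R B f) +
        (ι₁₃ R B t - ι₁₃ R B f) * (s12 R B (Δ₂ R B t) - s23 R B (Δ₁ R B t)) -
        (ι₂₃ R B t - ι₂₃ R B f) * (Δ₂ R B t - Δ₂ R B f) =
        ι₁₂ R B t * Δ₁ R B t - ι₁₂ R B t * Δ₁ R B f - ι₁₂ R B f * Δ₁ R B t +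
        ι₁₂ R B f * Δ₁ R B f + ι₁₃ R B t * s12 R B (Δ₂ R B t) -
        ι₁₃ R B t * s23 R B (Δ₁ R B t) - ι₁₃ R B f * s12 R B (Δ₂ R B t) +
        ι₁₃ R B f * s23 R B (Δ₁ R B t) - ι₂₃ R B t * Δ₂ R B t + ι₂₃ R B t * Δ₂ R B f +
        ι₂₃ R B f * Δ₂ R B t - ι₂₃ R B f * Δ₂ R B f := by
      simp only [mul_add, add_mul, mul_sub, sub_mul]
      abel
    rw [hfac]; exact keyE
  -- bridges
  have hr12 : ι₁₂ R B t - ι₁₂ R B f = ι₁₂ R B (rOf R B F) := by rw [hrr, map_sub]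
  have hr13 : ι₁₃ R B t - ι₁₃ R B f = ι₁₃ R B (rOf R B F) := by rw [hrr, map_sub]
  have hr23 : ι₂₃ R B t - ι₂₃ R B f = ι₂₃ R B (rOf R B F) := by rw [hrr, map_sub]
  have hd1 : Δ₁ R B t - Δ₁ R B f = ι₁₃ R B (rOf R B F) + ι₂₃ R B (rOf R B F) := by
    rw [← goal1, hrr, map_sub]
  have hd2 : Δ₂ R B t - Δ₂ R B f = ι₁₃ R B (rOf R B F) + ι₁₂ R B (rOf R B F) := by
    rw [← goal2, hrr, map_sub]
  have htau_r : τ R B (rOf R B F) = -(rOf R B F) := by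
    rw [hrr, map_sub, htdef, tau_tau, neg_sub]
  have hds : s12 R B (Δ₂ R B t) - s23 R B (Δ₁ R B t) =
      ι₂₃ R B (rOf R B F) - ι₁₂ R B (rOf R B F) := by
    have h1 : s12 R B (Δ₂ R B (rOf R B F)) =
        ι₂₃ R B (rOf R B F) - ι₁₂ R B (rOf R B F) := by
      rw [goal2, map_add, s12_i13, s12_i12, htau_r, map_neg, sub_eq_add_neg]
    rw [← h1, hrr, map_sub, map_sub, p7t]
  rw [hr12, hr13, hr23, hd1, hd2, hds] at key2
  refine ⟨goal1, goal2, ?_⟩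
  have hfin : (ι₁₂ R B (rOf R B F) * ι₁₃ R B (rOf R B F) -
        ι₁₃ R B (rOf R B F) * ι₁₂ R B (rOf R B F)) +
      (ι₁₂ R B (rOf R B F) * ι₂₃ R B (rOf R B F) -
        ι₂₃ R B (rOf R B F) * ι₁₂ R B (rOf R B F)) +
      (ι₁₃ R B (rOf R B F) * ι₂₃ R B (rOf R B F) -
        ι₂₃ R B (rOf R B F) * ι₁₃ R B (rOf R B F)) =
      ι₁₂ R B (rOf R B F) * (ι₁₃ R B (rOf R B F) + ι₂₃ R B (rOf R B F)) +
      ι₁₃ R B (rOf R B F) * (ι₂₃ R B (rOf R B F) - ι₁₂ R B (rOf R B F)) -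
      ι₂₃ R B (rOf R B F) * (ι₁₃ R B (rOf R B F) + ι₁₂ R B (rOf R B F)) := by
    simp only [mul_add, add_mul, mul_sub, sub_mul]
    abel
  rw [hfin]; exact key2
end Stmt
end
end

section
/- Let k be a commutative ring containing the rationals, A an associative unital k-algebra, and ⋆ a formal deformation of A: an associative k[[ħ]]-bilinear product on A[[ħ]] such that 1 ⋆ x = x = x ⋆ 1 for all x ∈ A[[ħ]] and a ⋆ b ≡ a·b (mod ħ) for all a, b ∈ A. Then every idempotent P ∈ A (P·P = P) lifts to a ⋆-idempotent: there exists P̂ ∈ A[[ħ]] with P̂ ⋆ P̂ = P̂ and P̂ ≡ P (mod ħ). -/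
/-!
STATEMENT 18: Over a commutative ring `k ⊇ ℚ`, every idempotent `P` of an associative
unital `k`-algebra `A` lifts through any formal deformation `⋆` of `A`: there is
`P̂ ∈ A[[ħ]]` with `P̂ ⋆ P̂ = P̂` and `P̂ ≡ P (mod ħ)`.  The formal deformation is given
by a family of `k`-bilinear maps `Cₙ` with `C₀` the original multiplication, extended
`k[[ħ]]`-bilinearly to `A[[ħ]]`, assumed associative and unital.
-/

open TensorProduct

noncomputable section

namespace Stmt

set_option linter.unusedSectionVars false

variable (k : Type*) [CommRing k] [Algebra ℚ k] (A : Type*) [Ring A] [Algebra k A]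

/-- The `k[[ħ]]`-bilinear product on `A[[ħ]]` determined by a family of `k`-bilinear
maps `Cₗ : A × A → A`:  the coefficient of `ħⁿ` in `x ⋆ y` is
`Σ_{l+i+j=n} C_l (xᵢ, yⱼ)`. -/
def starC (C : ℕ → A →ₗ[k] A →ₗ[k] A) (x y : PowerSeries A) : PowerSeries A :=
  PowerSeries.mk fun n =>
    ∑ p ∈ Finset.HasAntidiagonal.antidiagonal n, ∑ q ∈ Finset.HasAntidiagonal.antidiagonal p.2,
      C p.1 (PowerSeries.coeff q.1 x) (PowerSeries.coeff q.2 y)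

section Aux

variable {k A}
variable (C : ℕ → A →ₗ[k] A →ₗ[k] A)

lemma coeff_starC (x y : PowerSeries A) (n : ℕ) :
    PowerSeries.coeff n (starC k A C x y) =
      ∑ p ∈ Finset.HasAntidiagonal.antidiagonal n, ∑ q ∈ Finset.HasAntidiagonal.antidiagonal p.2,
        C p.1 (PowerSeries.coeff q.1 x) (PowerSeries.coeff q.2 y) := by
  simp [starC]

lemma starC_add_left (x y z : PowerSeries A) :
    starC k A C (x + y) z = starC k A C x z + starC k A C y z := by
  ext n
  simp [coeff_starC, map_add, LinearMap.add_apply, Finset.sum_add_distrib]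

lemma starC_add_right (x y z : PowerSeries A) :
    starC k A C x (y + z) = starC k A C x y + starC k A C x z := by
  ext n
  simp [coeff_starC, map_add, Finset.sum_add_distrib]

lemma starC_zero_left (y : PowerSeries A) : starC k A C 0 y = 0 := by
  ext n; simp [coeff_starC]

lemma starC_zero_right (x : PowerSeries A) : starC k A C x 0 = 0 := by
  ext n; simp [coeff_starC]

lemma starC_sub_left (x y z : PowerSeries A) :
    starC k A C (x - y) z = starC k A C x z - starC k A C y z := by
  ext n
  simp [coeff_starC, map_sub, LinearMap.sub_apply, Finset.sum_sub_distrib]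

lemma starC_sub_right (x y z : PowerSeries A) :
    starC k A C x (y - z) = starC k A C x y - starC k A C x z := by
  ext n
  simp [coeff_starC, map_sub, Finset.sum_sub_distrib]

/-- `x` has ħ-adic order at least `n`. -/
def ordGe (n : ℕ) (x : PowerSeries A) : Prop :=
  ∀ m < n, PowerSeries.coeff m x = 0

lemma ordGe_zero' (x : PowerSeries A) : ordGe (A := A) 0 x :=
  fun m hm => absurd hm (Nat.not_lt_zero m)

lemma ordGe_neg {n : ℕ} {x : PowerSeries A} (h : ordGe n x) : ordGe n (-x) := by
  intro m hm; simp [h m hm]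

lemma ordGe_starC {a b : ℕ} {x y : PowerSeries A} (hx : ordGe a x) (hy : ordGe b y) :
    ordGe (a + b) (starC k A C x y) := by
  intro m hm
  rw [coeff_starC]
  refine Finset.sum_eq_zero fun p hp => Finset.sum_eq_zero fun q hq => ?_
  rcases lt_or_ge q.1 a with h1 | h1
  · rw [hx q.1 h1]; simp
  rcases lt_or_ge q.2 b with h2 | h2
  · rw [hy q.2 h2]; simp
  exfalso
  rw [Finset.HasAntidiagonal.mem_antidiagonal] at hp hq
  omega

/-- Type synonym for `A[[ħ]]` carrying the deformed product. -/
def Def (_C : ℕ → A →ₗ[k] A →ₗ[k] A) : Type _ := PowerSeries A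

instance : AddCommGroup (Def C) := inferInstanceAs (AddCommGroup (PowerSeries A))

/-- The deformed ring structure, given associativity and unitality. -/
def defRing
    (hunit_left : ∀ x : PowerSeries A, starC k A C 1 x = x)
    (hunit_right : ∀ x : PowerSeries A, starC k A C x 1 = x)
    (hassoc : ∀ x y z : PowerSeries A,
      starC k A C (starC k A C x y) z = starC k A C x (starC k A C y z)) :
    Ring (Def C) :=
  { (inferInstance : AddCommGroup (Def C)) with
    mul := starC k A C
    one := (1 : PowerSeries A)
    mul_assoc := hassoc
    one_mul := hunit_left
    mul_one := hunit_right
    left_distrib := starC_add_right C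
    right_distrib := fun a b c => starC_add_left C a b c
    zero_mul := starC_zero_left C
    mul_zero := starC_zero_right C }

lemma newton_sq {R : Type*} [Ring R] (x : R) :
    (3*x^2 - 2*x^3) * (3*x^2 - 2*x^3) - (3*x^2 - 2*x^3)
      = (x*x - x) * (x*x - x) * (4*(x*x - x) - 3) := by
  noncomm_ring

lemma newton_diff {R : Type*} [Ring R] (x : R) :
    (3*x^2 - 2*x^3) - x = -((2*x - 1) * (x*x - x)) := by
  noncomm_ring

end Aux

/-- **Idempotents lift through formal deformations.**  If `⋆` is a formal deformation
of `A` (associative, unital, and deforming the original product, i.e. `C 0 = mul`),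
then every idempotent `P ∈ A` lifts to a `⋆`-idempotent `P̂ ∈ A[[ħ]]` whose constant
coefficient is `P`. -/
theorem idempotent_lifts
    (C : ℕ → A →ₗ[k] A →ₗ[k] A)
    (hC0 : C 0 = LinearMap.mul k A)
    (hunit_left : ∀ x : PowerSeries A, starC k A C 1 x = x)
    (hunit_right : ∀ x : PowerSeries A, starC k A C x 1 = x)
    (hassoc : ∀ x y z : PowerSeries A,
      starC k A C (starC k A C x y) z = starC k A C x (starC k A C y z)) :
    ∀ P : A, P * P = P →
      ∃ Phat : PowerSeries A,
        starC k A C Phat Phat = Phat ∧ PowerSeries.constantCoeff Phat = P := by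
  intro P hP
  letI : Ring (Def C) := defRing C hunit_left hunit_right hassoc
  -- the Newton iteration
  let e : ℕ → Def C := fun m =>
    Nat.rec ((PowerSeries.C P : PowerSeries A) : Def C)
      (fun _ x => 3*x^2 - 2*x^3) m
  have he0 : e 0 = (PowerSeries.C P : PowerSeries A) := rfl
  have heS : ∀ m, e (m+1) = 3*(e m)^2 - 2*(e m)^3 := fun m => rfl
  have hmul : ∀ x y : Def C, x * y = starC k A C x y := fun _ _ => rfl
  -- the defect `f m = e m * e m - e m` has order ≥ 2^m
  have hford : ∀ m, ordGe (2^m) ((e m * e m - e m : Def C) : PowerSeries A) := by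
    intro m
    induction m with
    | zero =>
      intro j hj
      interval_cases j
      erw [map_sub, hmul, coeff_starC]
      simp [he0, hC0, hP]
    | succ m ih =>
      have key : (e (m+1) * e (m+1) - e (m+1) : Def C)
          = (e m * e m - e m) * (e m * e m - e m) * (4*(e m * e m - e m) - 3) := by
        rw [heS]; exact newton_sq (e m)
      have h2 : (2:ℕ)^(m+1) = 2^m + 2^m + 0 := by rw [pow_succ]; ring
      rw [key, h2, hmul, hmul]
      exact ordGe_starC C (ordGe_starC C ih ih) (ordGe_zero' _)
  -- consecutive iterates agree to order 2^m
  have hdiff : ∀ m, ordGe (2^m) ((e (m+1) - e m : Def C) : PowerSeries A) := by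
    intro m
    have key : (e (m+1) - e m : Def C) = -((2*(e m) - 1) * (e m * e m - e m)) := by
      rw [heS]; exact newton_diff (e m)
    rw [key, hmul]
    have : (2:ℕ)^m = 0 + 2^m := by ring
    rw [this]
    exact ordGe_neg (ordGe_starC C (ordGe_zero' _) (hford m))
  -- coefficients stabilize
  have hstab : ∀ m m', m ≤ m' → ∀ j, j < 2^m →
      PowerSeries.coeff j (e m') = PowerSeries.coeff j (e m) := by
    intro m m' hle
    induction m' with
    | zero =>
      intro j hj
      have : m = 0 := Nat.le_zero.mp hle
      rw [this]
    | succ m' ih =>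
      intro j hj
      rcases Nat.lt_or_ge m (m'+1) with h | h
      · have hle' : m ≤ m' := Nat.lt_succ_iff.mp h
        have h0 : PowerSeries.coeff j ((e (m'+1) - e m' : Def C) : PowerSeries A) = 0 := by
          apply hdiff m' j
          calc j < 2^m := hj
            _ ≤ 2^m' := Nat.pow_le_pow_right (by norm_num) hle'
        erw [map_sub, sub_eq_zero] at h0
        rw [h0, ih hle' j hj]
      · have : m = m' + 1 := le_antisymm hle h
        rw [this]
  let E : ℕ → PowerSeries A := fun m => e m
  have hE : ∀ m, E m = e m := fun _ => rfl
  set Phat : PowerSeries A :=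
    PowerSeries.mk (fun n => PowerSeries.coeff n (e n)) with hPhat
  have hPc : ∀ j m, j < 2^m →
      PowerSeries.coeff j Phat = PowerSeries.coeff j (e m) := by
    intro j m hj
    have hj' : j < 2^j := Nat.lt_two_pow_self (n := j)
    have hcj : PowerSeries.coeff j Phat = PowerSeries.coeff j (e j) := by
      simp [hPhat]
    rcases le_or_gt m j with h | h
    · rw [hcj, hstab m j h j hj]
    · rw [hcj, hstab j m (le_of_lt h) j hj']
  refine ⟨Phat, ?_, ?_⟩
  · ext n
    obtain ⟨m, hn2⟩ : ∃ m, n < 2 ^ m := ⟨n, Nat.lt_two_pow_self (n := n)⟩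
    have hord : ordGe (n+1) (Phat - E m) := by
      intro j hj
      rw [map_sub, sub_eq_zero]
      exact hPc j m (lt_of_le_of_lt (by omega : j ≤ n) hn2)
    have split : starC k A C Phat Phat - starC k A C (E m) (E m)
        = starC k A C (Phat - E m) Phat
          + starC k A C (E m) (Phat - E m) := by
      rw [starC_sub_left, starC_sub_right]
      exact (sub_add_sub_cancel _ _ _).symm
    have hc1 : PowerSeries.coeff n (starC k A C (Phat - E m) Phat) = 0 := by
      have := ordGe_starC C hord (ordGe_zero' (Phat : PowerSeries A))
      rw [Nat.add_zero] at this
      exact this n (Nat.lt_succ_self n)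
    have hc2 : PowerSeries.coeff n
        (starC k A C (E m) (Phat - E m)) = 0 := by
      have := ordGe_starC C (ordGe_zero' ((e m : Def C) : PowerSeries A)) hord
      rw [Nat.zero_add] at this
      exact this n (Nat.lt_succ_self n)
    have heq : PowerSeries.coeff n (starC k A C Phat Phat)
        = PowerSeries.coeff n (starC k A C (E m) (E m)) := by
      have := congrArg (PowerSeries.coeff n) split
      rw [map_sub, map_add, hc1, hc2, add_zero, sub_eq_zero] at this
      exact this
    have hfm : PowerSeries.coeff n (starC k A C (E m) (E m))
        = PowerSeries.coeff n (E m) := by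
      have h0 : PowerSeries.coeff n ((e m * e m - e m : Def C) : PowerSeries A) = 0 :=
        hford m n hn2
      rw [hmul] at h0
      erw [map_sub, sub_eq_zero] at h0
      exact h0
    rw [heq, hfm]
    exact (hPc n m hn2).symm
  · have : PowerSeries.constantCoeff Phat = PowerSeries.coeff 0 (e 0) := by
      simp [hPhat, ← PowerSeries.coeff_zero_eq_constantCoeff]
    rw [this, he0]
    simp

end Stmt
end
end
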